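/- Let G be a torsion-free abelian group and let R be a G-graded commutative ring that is an integral domain. Then every invertible element of R is homogeneous. -/

import Mathlib

open DirectSum

lemma mul_apply_max_aux {G : Type*} [AddCommGroup G] [DecidableEq G]
    {L : Type*} [AddCommGroup L] [LinearOrder L] [IsOrderedAddMonoid L] (ψ : G →+ L) (hψ : Function.Injective ψ)
    {R : Type*} [CommRing R] [IsDomain R] (𝒜 : G → AddSubgroup R) [GradedRing 𝒜]
    [∀ (i : G) (x : 𝒜 i), Decidable (x ≠ 0)]
    (x y : ⨁ i, 𝒜 i) {a b : G} (ha : a ∈ DFinsupp.support x) (hb : b ∈ DFinsupp.support y)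
    (hamax : ∀ c ∈ DFinsupp.support x, ψ c ≤ ψ a)
    (hbmax : ∀ c ∈ DFinsupp.support y, ψ c ≤ ψ b) :
    (((x * y) (a + b) : R)) ≠ 0 := by
  rw [DirectSum.coe_mul_apply]
  have hset : (DFinsupp.support x ×ˢ DFinsupp.support y).filter
      (fun ij : G × G => ij.1 + ij.2 = a + b) = {(a, b)} := by
    ext ⟨i, j⟩
    simp only [Finset.mem_filter, Finset.mem_product, Finset.mem_singleton, Prod.mk.injEq]
    constructor
    · rintro ⟨⟨hi, hj⟩, hij⟩
      have h1 : ψ i + ψ j = ψ a + ψ b := by rw [← map_add, ← map_add, hij]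
      have h2 : ψ i = ψ a := by
        by_contra h
        have hlt := lt_of_le_of_ne (hamax i hi) h
        exact absurd h1 (ne_of_lt (add_lt_add_of_lt_of_le hlt (hbmax j hj)))
      have hia : i = a := hψ h2
      subst hia
      exact ⟨rfl, add_left_cancel hij⟩
    · rintro ⟨rfl, rfl⟩
      exact ⟨⟨ha, hb⟩, rfl⟩
  rw [hset, Finset.sum_singleton]
  exact mul_ne_zero (by simpa using DFinsupp.mem_support_iff.mp ha)
    (by simpa using DFinsupp.mem_support_iff.mp hb)

lemma unit_homog_aux {G : Type*} [AddCommGroup G] [DecidableEq G]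
    {L : Type*} [AddCommGroup L] [LinearOrder L] [IsOrderedAddMonoid L] (ψ : G →+ L) (hψ : Function.Injective ψ)
    {R : Type*} [CommRing R] [IsDomain R] (𝒜 : G → AddSubgroup R) [GradedRing 𝒜]
    (f : R) (hf : IsUnit f) : SetLike.IsHomogeneousElem 𝒜 f := by
  classical
  obtain ⟨u, rfl⟩ := hf
  set f : R := (u : R) with hfdef
  set g : R := ((u⁻¹ : Rˣ) : R) with hg
  have hfg : f * g = 1 := u.mul_inv
  set x := DirectSum.decompose 𝒜 f with hx
  set y := DirectSum.decompose 𝒜 g with hy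
  have hxy : x * y = DirectSum.decompose 𝒜 (1 : R) := by
    rw [hx, hy, ← DirectSum.decompose_mul, hfg]
  have hf0 : f ≠ 0 := u.ne_zero
  have hg0 : g ≠ 0 := u⁻¹.ne_zero
  have hdz : ∀ r : R, DirectSum.decompose 𝒜 r = 0 → r = 0 := fun r h => by
    have h2 := congrArg (DirectSum.decompose 𝒜).symm h
    rwa [Equiv.symm_apply_apply, DirectSum.decompose_symm_zero] at h2
  have hxs : (DFinsupp.support x).Nonempty := by
    rw [Finset.nonempty_iff_ne_empty, Ne, DFinsupp.support_eq_empty]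
    intro h
    exact hf0 (hdz f (hx ▸ h))
  have hys : (DFinsupp.support y).Nonempty := by
    rw [Finset.nonempty_iff_ne_empty, Ne, DFinsupp.support_eq_empty]
    intro h
    exact hg0 (hdz g (hy ▸ h))
  have hcomp : ∀ n : G, n ≠ 0 → ((x * y) n : R) = 0 := by
    intro n hn
    rw [hxy]
    exact DirectSum.decompose_of_mem_ne 𝒜 (SetLike.one_mem_graded 𝒜) (Ne.symm hn)
  let ψ' : G →+ L := AddMonoidHom.mk' (fun c => -ψ c) (by intro s t; simp [map_add]; abel)
  have hψ' : Function.Injective ψ' := fun s t h => hψ (neg_injective h)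
  obtain ⟨a, ha, hamax⟩ := Finset.exists_max_image (DFinsupp.support x) (fun c => ψ c) hxs
  obtain ⟨b, hb, hbmax⟩ := Finset.exists_max_image (DFinsupp.support y) (fun c => ψ c) hys
  obtain ⟨a', ha', hamin⟩ := Finset.exists_min_image (DFinsupp.support x) (fun c => ψ c) hxs
  obtain ⟨b', hb', hbmin⟩ := Finset.exists_min_image (DFinsupp.support y) (fun c => ψ c) hys
  have hab : a + b = 0 := by
    by_contra h
    exact mul_apply_max_aux ψ hψ 𝒜 x y ha hb hamax hbmax (hcomp _ h)
  have hab' : a' + b' = 0 := by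
    by_contra h
    refine mul_apply_max_aux ψ' hψ' 𝒜 x y ha' hb'
      (fun c hc => ?_) (fun c hc => ?_) (hcomp _ h)
    · exact neg_le_neg (hamin c hc)
    · exact neg_le_neg (hbmin c hc)
  -- conclude ψ a = ψ a'
  have hsum : ψ a + ψ b = ψ a' + ψ b' := by
    rw [← map_add, ← map_add, hab, hab']
  have haa' : ψ a' = ψ a := by
    have h1 := hamin a ha
    have h2 := hbmin b hb
    by_contra h
    have hlt := lt_of_le_of_ne h1 h
    exact absurd hsum.symm (ne_of_lt (add_lt_add_of_lt_of_le hlt h2))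
  -- support of x is {a}
  have hsupp : DFinsupp.support x ⊆ {a} := by
    intro c hc
    rw [Finset.mem_singleton]
    refine hψ (le_antisymm (hamax c hc) ?_)
    rw [← haa']
    exact hamin c hc
  refine ⟨a, ?_⟩
  have hsum2 := DirectSum.sum_support_decompose 𝒜 f
  rw [← hx] at hsum2
  have : ∑ c ∈ DFinsupp.support x, ((x c : R)) = ((x a : R)) := by
    rcases Finset.subset_singleton_iff.mp hsupp with h | h
    · exact absurd h (Finset.nonempty_iff_ne_empty.mp hxs)
    · rw [h, Finset.sum_singleton]
  rw [this] at hsum2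
  rw [← hsum2]
  exact (x a).2

/-- Every invertible element of a `G`-graded integral domain with `G` a torsion-free abelian
group is homogeneous. -/
theorem unit_of_graded_domain_is_homogeneous
    {G : Type*} [AddCommGroup G] [DecidableEq G]
    (hG : ∀ (n : ℕ) (x : G), n ≠ 0 → n • x = 0 → x = 0)
    {R : Type*} [CommRing R] [IsDomain R] (𝒜 : G → AddSubgroup R) [GradedRing 𝒜]
    (f : R) (hf : IsUnit f) :
    SetLike.IsHomogeneousElem 𝒜 f := by
  classical
  let V := LocalizedModule (nonZeroDivisors ℤ) G
  let K := FractionRing ℤ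
  letI : Module ℚ V := Module.compHom V (Rat.castHom K)
  let b := Module.Basis.ofVectorSpace ℚ V
  letI : LinearOrder (Module.Basis.ofVectorSpaceIndex ℚ V) := linearOrderOfSTO WellOrderingRel
  let ψ : G →+ Lex ((Module.Basis.ofVectorSpaceIndex ℚ V) →₀ ℚ) := AddMonoidHom.mk'
    (fun g => toLex (b.repr (LocalizedModule.mkLinearMap (nonZeroDivisors ℤ) G g)))
    (by intro s t; rw [map_add, map_add]; rfl)
  have hψ : Function.Injective ψ := by
    intro s t h
    simp only [ψ, AddMonoidHom.mk'_apply] at h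
    have h2 : LocalizedModule.mkLinearMap (nonZeroDivisors ℤ) G s
        = LocalizedModule.mkLinearMap (nonZeroDivisors ℤ) G t :=
      b.repr.injective (toLex.injective h)
    have h3 : LocalizedModule.mkLinearMap (nonZeroDivisors ℤ) G (s - t) = 0 := by
      rw [map_sub, h2, sub_self]
    have h4 : LocalizedModule.mk (s - t) (1 : nonZeroDivisors ℤ)
        = LocalizedModule.mk (0 : G) (1 : nonZeroDivisors ℤ) := by
      simpa [LocalizedModule.mkLinearMap_apply, LocalizedModule.zero_mk] using h3
    obtain ⟨c, hc⟩ := LocalizedModule.mk_eq.mp h4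
    have hrm : (c : ℤ) • (s - t) = 0 := by have := hc; simp at this; exact this
    set r : ℤ := (c : ℤ) with hrdef
    have hr0 : r ≠ 0 := nonZeroDivisors.ne_zero c.2
    have hn0 : r.natAbs ≠ 0 := Int.natAbs_ne_zero.mpr hr0
    have hnm : r.natAbs • (s - t) = 0 := by
      rcases Int.natAbs_eq r with h | h
      · rw [← natCast_zsmul, ← h, hrm]
      · rw [← natCast_zsmul, ← neg_neg ((r.natAbs : ℤ)), ← h, neg_zsmul, hrm, neg_zero]
    exact sub_eq_zero.mp (hG _ _ hn0 hnm)
  exact unit_homog_aux ψ hψ 𝒜 f hf
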